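/- arXiv:0804.2219 — 4 statements merged into one kernel-verified Lean document; each statement's English description precedes it below -/
import Mathlib

section
/- Let R be a commutative ring and a_1, …, a_{n−1}, a_n ∈ R. Then a_1, …, a_{n−1}, a_n − X is a regular sequence on the polynomial ring R[X] if and only if a_1, …, a_{n−1} is a regular sequence on R. -/
open Polynomial RingTheory.Sequence Submodule
open scoped Pointwise

lemma smul_top_eq_span {S : Type*} [CommRing S] (r : S) :
    r • (⊤ : Submodule S S) = (Ideal.span {r} : Ideal S) := by
  rw [← Submodule.ideal_span_singleton_smul]
  ext x
  simp [Ideal.mem_span_singleton, Submodule.mem_smul_top_iff]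

lemma my_cons {S : Type*} [CommRing S] (r : S) {T : Type*} [CommRing T]
    (e : (S ⧸ Ideal.span {r}) ≃+* T) (L : List S) :
    IsRegular S (r :: L) ↔
      IsSMulRegular S r ∧ IsRegular T (L.map (fun x => e (Ideal.Quotient.mk _ x))) := by
  rw [isRegular_cons_iff]
  refine and_congr_right fun _ => ?_
  let e₁ : QuotSMulTop r S ≃ₗ[S] S ⧸ (Ideal.span {r} : Ideal S) :=
    Submodule.quotEquivOfEq _ _ (smul_top_eq_span r)
  let e₂ : QuotSMulTop r S ≃+ T := e₁.toAddEquiv.trans e.toAddEquiv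
  refine AddEquiv.isRegular_congr (e := e₂) ?_
  rw [List.forall₂_map_right_iff]
  refine List.forall₂_same.mpr fun c _ x => ?_
  obtain ⟨y, rfl⟩ := Submodule.Quotient.mk_surjective _ x
  show e₂ (Submodule.Quotient.mk (c * y)) = _
  have h1 : ∀ z : S, e₂ (Submodule.Quotient.mk z) = e (Ideal.Quotient.mk _ z) := by
    intro z
    simp only [e₂, e₁, AddEquiv.trans_apply, LinearEquiv.coe_toAddEquiv,
      Submodule.quotEquivOfEq_mk]
    rfl
  rw [h1, h1, map_mul, smul_eq_mul, map_mul]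

lemma isSMulRegular_C_iff {R : Type*} [CommRing R] (a : R) :
    IsSMulRegular (Polynomial R) (C a) ↔ IsSMulRegular R a := by
  constructor
  · intro h r s hrs
    have hrs' : a * r = a * s := hrs
    have : (C a) • (C r) = (C a) • (C s) := by
      simp only [smul_eq_mul, ← map_mul, hrs']
    exact C_injective (h this)
  · intro h p q hpq
    ext k
    apply h
    have := congrArg (fun t => Polynomial.coeff t k) hpq
    simpa [smul_eq_mul, coeff_C_mul] using this

lemma isRegular_nil_iff {R M : Type*} [CommRing R] [AddCommGroup M] [Module R M] :
    IsRegular M ([] : List R) ↔ Nontrivial M :=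
  ⟨fun h => h.nontrivial, fun _ => IsRegular.nil R M⟩

lemma isSMulRegular_C_sub_X {R : Type*} [CommRing R] (b : R) :
    IsSMulRegular (Polynomial R) (C b - X) := by
  intro p q hpq
  have hm := (monic_X_sub_C b).isRegular.left
  apply hm
  simp only [smul_eq_mul] at hpq
  show (X - C b) * p = (X - C b) * q
  linear_combination -hpq

universe u

lemma key : ∀ (n : ℕ) {R : Type u} [CommRing R] (l : List R), l.length = n → ∀ (b : R),
    (IsRegular (Polynomial R) (l.map C ++ [C b - X]) ↔ IsRegular R l) := by
  intro n
  induction n with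
  | zero =>
    intro R _ l hl b
    rw [List.length_eq_zero_iff.mp hl]
    simp only [List.map_nil, List.nil_append]
    rw [isRegular_cons_iff, isRegular_nil_iff, isRegular_nil_iff]
    have h1 : IsSMulRegular (Polynomial R) (C b - X) := isSMulRegular_C_sub_X b
    rw [iff_true_intro h1, true_and]
    -- Nontrivial (QuotSMulTop (C b - X) R[X]) ↔ Nontrivial R
    rw [← not_subsingleton_iff_nontrivial, ← not_subsingleton_iff_nontrivial]
    apply not_congr
    have h2 : (Ideal.span {C b - X} : Ideal (Polynomial R)) = Ideal.span {X - C b} := by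
      rw [← Ideal.span_singleton_neg, neg_sub]
    let e₁ : QuotSMulTop (C b - X) (Polynomial R) ≃ₗ[Polynomial R]
        Polynomial R ⧸ (Ideal.span {X - C b} : Ideal (Polynomial R)) :=
      Submodule.quotEquivOfEq _ _ (by rw [smul_top_eq_span, h2])
    let e₂ := quotientSpanXSubCAlgEquiv b
    exact (e₁.toEquiv.trans e₂.toEquiv).subsingleton_congr
  | succ n ih =>
    intro R _ l hl b
    match l with
    | r :: rs =>
      simp only [List.map_cons, List.cons_append]
      have h2 : (Ideal.span {C r} : Ideal (Polynomial R)) =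
          Ideal.map Polynomial.C (Ideal.span {r}) := by
        rw [Ideal.map_span, Set.image_singleton]
      let e : (Polynomial R ⧸ (Ideal.span {C r} : Ideal (Polynomial R))) ≃+*
          Polynomial (R ⧸ Ideal.span {r}) :=
        (Ideal.quotEquivOfEq h2).trans
          (Ideal.polynomialQuotientEquivQuotientPolynomial (Ideal.span {r})).symm
      have he : ∀ p : Polynomial R,
          e (Ideal.Quotient.mk _ p) = p.map (Ideal.Quotient.mk (Ideal.span {r})) := by
        intro p
        show (Ideal.polynomialQuotientEquivQuotientPolynomial (Ideal.span {r})).symm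
          ((Ideal.quotEquivOfEq h2) (Ideal.Quotient.mk _ p)) = _
        rw [Ideal.quotEquivOfEq_mk, Ideal.polynomialQuotientEquivQuotientPolynomial_symm_mk]
      rw [my_cons (C r) e, isSMulRegular_C_iff,
          my_cons r (RingEquiv.refl (R ⧸ Ideal.span {r})) rs]
      refine and_congr_right fun _ => ?_
      have hlist : (rs.map C ++ [C b - X]).map (fun x => e (Ideal.Quotient.mk _ x)) =
          (rs.map (fun x => (RingEquiv.refl (R ⧸ Ideal.span {r}))
            (Ideal.Quotient.mk (Ideal.span {r}) x))).map C
            ++ [C (Ideal.Quotient.mk (Ideal.span {r}) b) - X] := by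
        rw [List.map_append, List.map_map, List.map_map]
        congr 1
        · apply List.map_congr_left
          intro x _
          simp only [Function.comp_apply, he, Polynomial.map_C]
          rfl
        · simp only [List.map_cons, List.map_nil, he, Polynomial.map_sub,
            Polynomial.map_C, Polynomial.map_X]
      rw [hlist]
      exact ih _ (by simpa using Nat.succ_injective hl) _

/-- For elements `a_1, …, a_{n−1}, a_n` of a commutative ring `R`, the
sequence `a_1, …, a_{n−1}, a_n − X` is regular on `R[X]` if and only if `a_1, …, a_{n−1}`
is regular on `R`. -/
theorem regular_sequence_append_sub_X_iff {R : Type*} [CommRing R] {n : ℕ}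
    (a : Fin n → R) (b : R) :
    RingTheory.Sequence.IsRegular (Polynomial R)
      ((List.ofFn fun i => Polynomial.C (a i)) ++ [Polynomial.C b - Polynomial.X]) ↔
    RingTheory.Sequence.IsRegular R (List.ofFn a) := by
  have h := key (List.ofFn a).length (List.ofFn a) rfl b
  rwa [show ((List.ofFn a).map C) = (List.ofFn fun i => C (a i)) from List.map_ofFn] at h
end

section
/- Let A be a commutative local ring and f, g_1, …, g_n ∈ A. Assume that f is integral over the ideal I = (g_1, …, g_n), and that ker φ = ker^{(1)}φ (i.e. the kernel of φ is generated by its homogeneous elements of degree 1; this is the condition that the ideal (f, g_1, …, g_n) is of linear type, phrased via φ). Then f belongs to the ideal (g_1, …, g_n). In particular, a divisor of commutative linear type is Euler homogeneous. -/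
open MvPolynomial

/-- The `A`-algebra map `φ : A[s, ξ_1, …, ξ_n] → A[t]` with `φ(s) = f·t` and
`φ(ξ_j) = g_j·t`; variable `0` is `s` and variable `j.succ` is `ξ_j`. Its image is the
Rees algebra of the ideal `(f, g_1, …, g_n)`. -/
noncomputable def reesPhi {A : Type*} [CommRing A] {n : ℕ} (f : A) (g : Fin n → A) :
    MvPolynomial (Fin (n + 1)) A →ₐ[A] Polynomial A :=
  aeval (Fin.cons (Polynomial.C f * Polynomial.X) fun j => Polynomial.C (g j) * Polynomial.X)

/-- `ker^{(1)} φ`: the ideal of `A[s, ξ_1, …, ξ_n]` generated by the homogeneous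
elements of degree `1` lying in `ker φ`. -/
noncomputable def kerOne {A : Type*} [CommRing A] {n : ℕ} (f : A) (g : Fin n → A) :
    Ideal (MvPolynomial (Fin (n + 1)) A) :=
  Ideal.span {p | p ∈ RingHom.ker (reesPhi f g) ∧ p.IsHomogeneous 1}

/-- Evaluating a homogeneous polynomial at a scaled point scales the value by `r ^ m`. -/
lemma aeval_mul_of_isHomogeneous {A S : Type*} [CommRing A] [CommRing S] [Algebra A S]
    {σ : Type*} {p : MvPolynomial σ A} {m : ℕ}
    (hp : p.IsHomogeneous m) (r : S) (x : σ → S) :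
    aeval (fun i => r * x i) p = r ^ m * aeval x p := by
  rw [aeval_def, aeval_def, eval₂_eq, eval₂_eq, Finset.mul_sum]
  refine Finset.sum_congr rfl fun d hd => ?_
  have hdeg : d.degree = m := by
    by_contra h
    exact mem_support_iff.mp hd (hp.coeff_eq_zero h)
  have : ∏ i ∈ d.support, (r * x i) ^ d i
      = r ^ m * ∏ i ∈ d.support, x i ^ d i := by
    rw [← hdeg, Finsupp.degree_apply, ← Finset.prod_pow_eq_pow_sum, ← Finset.prod_mul_distrib]
    exact Finset.prod_congr rfl fun i _ => (mul_pow _ _ _)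
  rw [this]; ring

/-- An element of `I = (g_1, …, g_n)` lifts to a polynomial `C` with `φ(C) = x·t`
and with `C` vanishing at the point `s = 1, ξ = 0`. -/
lemma lift_mem_one {A : Type*} [CommRing A] {n : ℕ} (f : A) (g : Fin n → A)
    {x : A} (hx : x ∈ Ideal.span (Set.range g)) :
    ∃ C : MvPolynomial (Fin (n + 1)) A,
      reesPhi f g C = Polynomial.C x * Polynomial.X ∧
      aeval (Fin.cons 1 0 : Fin (n + 1) → A) C = 0 := by
  refine Submodule.span_induction (fun y hy => ?_) ⟨0, by simp⟩
    (fun y z _ _ ⟨Cy, hy1, hy2⟩ ⟨Cz, hz1, hz2⟩ =>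
      ⟨Cy + Cz, by rw [map_add, hy1, hz1, ← add_mul, ← Polynomial.C_add],
        by rw [map_add, hy2, hz2, add_zero]⟩)
    (fun a y _ ⟨Cy, hy1, hy2⟩ =>
      ⟨MvPolynomial.C a * Cy,
        by rw [map_mul, hy1]; simp only [reesPhi, aeval_C, algebraMap_eq,
          Polynomial.algebraMap_eq, smul_eq_mul, Polynomial.C_mul]; ring,
        by rw [map_mul, hy2, mul_zero]⟩) hx
  obtain ⟨j, rfl⟩ := hy
  exact ⟨X j.succ, by simp [reesPhi], by simp⟩

/-- An element of `I^k` lifts to a polynomial `C` with `φ(C) = x·t^k`, and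
(when `k ≥ 1`) with `C` vanishing at the point `s = 1, ξ = 0`. -/
lemma lift_mem_pow {A : Type*} [CommRing A] {n : ℕ} (f : A) (g : Fin n → A)
    (k : ℕ) {x : A} (hx : x ∈ (Ideal.span (Set.range g)) ^ k) :
    ∃ C : MvPolynomial (Fin (n + 1)) A,
      reesPhi f g C = Polynomial.C x * Polynomial.X ^ k ∧
      (k ≠ 0 → aeval (Fin.cons 1 0 : Fin (n + 1) → A) C = 0) := by
  induction k generalizing x with
  | zero => exact ⟨MvPolynomial.C x, by simp [reesPhi], by simp⟩
  | succ k ih =>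
    rw [pow_succ] at hx
    refine Submodule.mul_induction_on hx (fun m hm y hy => ?_) (fun y z hy hz => ?_)
    · obtain ⟨Cm, hm1, hm2⟩ := ih hm
      obtain ⟨Cy, hy1, hy2⟩ := lift_mem_one f g hy
      refine ⟨Cm * Cy, ?_, fun _ => by rw [map_mul, hy2, mul_zero]⟩
      rw [map_mul, hm1, hy1, Polynomial.C_mul, pow_succ]; ring
    · obtain ⟨Cy, hy1, hy2⟩ := hy
      obtain ⟨Cz, hz1, hz2⟩ := hz
      refine ⟨Cy + Cz, by rw [map_add, hy1, hz1, ← add_mul, ← Polynomial.C_add], fun h => ?_⟩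
      rw [map_add, hy2 h, hz2 h, add_zero]

/-- If `p` is homogeneous of degree `1` and `φ(p) = 0`, then `f · p(1,0,…,0) ∈ I`. -/
lemma key_deg_one {A : Type*} [CommRing A] {n : ℕ} (f : A) (g : Fin n → A)
    {p : MvPolynomial (Fin (n + 1)) A}
    (hp1 : reesPhi f g p = 0) (hp2 : p.IsHomogeneous 1) :
    f * aeval (Fin.cons 1 0 : Fin (n + 1) → A) p ∈ Ideal.span (Set.range g) := by
  have hCw : aeval (fun i => Polynomial.C ((Fin.cons f g : Fin (n+1) → A) i)) p
      = Polynomial.C (aeval (Fin.cons f g : Fin (n+1) → A) p) := by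
    have := comp_aeval_apply (Polynomial.CAlgHom (R := A)) p (f := Fin.cons f g)
    simpa [Polynomial.CAlgHom] using this.symm
  have hw : aeval (Fin.cons f g : Fin (n+1) → A) p = 0 := by
    have hfun : (Fin.cons (Polynomial.C f * Polynomial.X)
        (fun j => Polynomial.C (g j) * Polynomial.X) : Fin (n + 1) → Polynomial A)
        = fun i => Polynomial.X * Polynomial.C ((Fin.cons f g : Fin (n+1) → A) i) := by
      funext i
      refine Fin.cases ?_ (fun j => ?_) i
      · rw [Fin.cons_zero, Fin.cons_zero, mul_comm]
      · rw [Fin.cons_succ, Fin.cons_succ, mul_comm]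
    have hform : reesPhi f g p
        = Polynomial.C (aeval (Fin.cons f g : Fin (n+1) → A) p) * Polynomial.X := by
      rw [reesPhi, hfun, aeval_mul_of_isHomogeneous hp2, pow_one, hCw, mul_comm]
    have h2 := congrArg (fun q => Polynomial.coeff q 1) (hform.symm.trans hp1)
    simp only [Polynomial.coeff_C_mul, Polynomial.coeff_X_one, mul_one,
      Polynomial.coeff_zero] at h2
    exact h2
  set I := Ideal.span (Set.range g) with hIdef
  have hq : Ideal.Quotient.mk I (f * aeval (Fin.cons 1 0 : Fin (n+1) → A) p) = 0 := by
    set q := Ideal.Quotient.mkₐ A I with hqdef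
    have hg0 : ∀ j, q (g j) = 0 := fun j =>
      Ideal.Quotient.eq_zero_iff_mem.mpr (Ideal.subset_span ⟨j, rfl⟩)
    have h3 : (fun i => q ((Fin.cons f g : Fin (n+1) → A) i))
        = fun i => q f * q ((Fin.cons 1 0 : Fin (n+1) → A) i) := by
      funext i
      refine Fin.cases ?_ (fun j => ?_) i
      · rw [Fin.cons_zero, Fin.cons_zero, map_one, mul_one]
      · rw [Fin.cons_succ, Fin.cons_succ, hg0, Pi.zero_apply, map_zero, mul_zero]
    have hmain : Ideal.Quotient.mk I (f * aeval (Fin.cons 1 0 : Fin (n+1) → A) p)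
        = q f * aeval (fun i => q ((Fin.cons 1 0 : Fin (n+1) → A) i)) p := by
      show q (f * aeval (Fin.cons 1 0 : Fin (n+1) → A) p) = _
      rw [map_mul, comp_aeval_apply]
    rw [hmain, ← pow_one (q f), ← aeval_mul_of_isHomogeneous hp2, ← h3,
      ← comp_aeval_apply, hw, map_zero]
  exact Ideal.Quotient.eq_zero_iff_mem.mp hq

/-- Every element of `ker^{(1)} φ` satisfies `f · p(1,0,…,0) ∈ I`. -/
lemma kerOne_key {A : Type*} [CommRing A] {n : ℕ} (f : A) (g : Fin n → A)
    {p : MvPolynomial (Fin (n + 1)) A} (hp : p ∈ kerOne f g) :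
    f * aeval (Fin.cons 1 0 : Fin (n + 1) → A) p ∈ Ideal.span (Set.range g) := by
  refine Submodule.span_induction (fun y hy => ?_) (by simp) (fun y z _ _ hy hz => ?_)
    (fun a y _ hy => ?_) hp
  · exact key_deg_one f g hy.1 hy.2
  · rw [map_add, mul_add]; exact Ideal.add_mem _ hy hz
  · rw [smul_eq_mul, map_mul, mul_left_comm]
    exact Ideal.mul_mem_left _ _ hy

/-- Let `A` be a commutative local ring and `f, g_1, …, g_n ∈ A` with `f`
integral over the ideal `I = (g_1, …, g_n)`. If `ker φ = ker^{(1)} φ` (the linear type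
condition), then `f ∈ (g_1, …, g_n)`. -/
theorem mem_of_linear_type {A : Type*} [CommRing A] [IsLocalRing A] {n : ℕ}
    (f : A) (g : Fin n → A)
    (hint : ∃ d : ℕ, 0 < d ∧ ∃ c : ℕ → A,
      (∀ i < d, c i ∈ (Ideal.span (Set.range g)) ^ (d - i)) ∧
      f ^ d + ∑ i ∈ Finset.range d, c i * f ^ i = 0)
    (hlin : RingHom.ker (reesPhi f g) = kerOne f g) :
    f ∈ Ideal.span (Set.range g) := by
  classical
  obtain ⟨d, hd, c, hc, heq⟩ := hint
  have hCex : ∀ i, i < d → ∃ C : MvPolynomial (Fin (n + 1)) A,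
      reesPhi f g C = Polynomial.C (c i) * Polynomial.X ^ (d - i) ∧
      aeval (Fin.cons 1 0 : Fin (n + 1) → A) C = 0 := by
    intro i hi
    obtain ⟨C, h1, h2⟩ := lift_mem_pow f g (d - i) (hc i hi)
    exact ⟨C, h1, h2 (by omega)⟩
  choose! Cf hC1 hC2 using hCex
  set P : MvPolynomial (Fin (n + 1)) A :=
    X 0 ^ d + ∑ i ∈ Finset.range d, Cf i * X 0 ^ i with hP
  have hX0 : reesPhi f g (X (0 : Fin (n + 1))) = Polynomial.C f * Polynomial.X := by
    simp [reesPhi]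
  have hPker : reesPhi f g P = 0 := by
    rw [hP, map_add, map_pow, map_sum, hX0]
    have hterm : ∀ i ∈ Finset.range d, reesPhi f g (Cf i * X 0 ^ i)
        = Polynomial.C (c i * f ^ i) * Polynomial.X ^ d := by
      intro i hi
      rw [Finset.mem_range] at hi
      have hpow : (Polynomial.X : Polynomial A) ^ (d - i) * Polynomial.X ^ i
          = Polynomial.X ^ d := by
        rw [← pow_add, Nat.sub_add_cancel hi.le]
      rw [map_mul, map_pow, hX0, hC1 i hi, mul_pow, ← Polynomial.C_pow,
        Polynomial.C_mul, ← hpow]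
      ring
    rw [Finset.sum_congr rfl hterm, ← Finset.sum_mul, mul_pow, ← Polynomial.C_pow,
      ← map_sum Polynomial.C _ _, ← add_mul, ← Polynomial.C_add, heq, map_zero, zero_mul]
  have hPmem : P ∈ kerOne f g := hlin ▸ hPker
  have hεP : aeval (Fin.cons 1 0 : Fin (n + 1) → A) P = 1 := by
    rw [hP, map_add, map_pow, map_sum, aeval_X, Fin.cons_zero, one_pow]
    have hterm : ∀ i ∈ Finset.range d,
        aeval (Fin.cons 1 0 : Fin (n + 1) → A) (Cf i * X 0 ^ i) = 0 := by
      intro i hi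
      rw [map_mul, hC2 i (Finset.mem_range.mp hi), zero_mul]
    rw [Finset.sum_congr rfl hterm, Finset.sum_const_zero, add_zero]
  have := kerOne_key f g hPmem
  rwa [hεP, mul_one] at this
end

section
/- Let A be a commutative local ring and f, g_1, …, g_n ∈ A. Assume that f is integral over the ideal I = (g_1, …, g_n), and that there exists an integer N ≥ 0 such that s^N·p ∈ ker^{(1)}φ for every p ∈ ker φ (property (GCL)). Then f belongs to the ideal (g_1, …, g_n). In particular, a divisor satisfying property (GCL) is Euler homogeneous. -/
open MvPolynomial

theorem aux_aeval_smul {σ A B : Type*} [CommSemiring A] [CommRing B] [Algebra A B]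
    {k : ℕ} {φ : MvPolynomial σ A} (h : φ.IsHomogeneous k) (r : B) (x : σ → B) :
    aeval (r • x) φ = r ^ k * aeval x φ := by
  rw [aeval_def, aeval_def, eval₂_eq, eval₂_eq, Finset.mul_sum]
  refine Finset.sum_congr rfl fun d hd => ?_
  have hdeg : ∑ i ∈ d.support, d i = k := by
    have h1 := h (mem_support_iff.mp hd)
    rwa [Pi.one_def, ← Finsupp.degree_eq_weight_one, Finsupp.degree_apply] at h1
  simp only [Pi.smul_apply, smul_eq_mul, mul_pow]
  rw [Finset.prod_mul_distrib, Finset.prod_pow_eq_pow_sum, hdeg]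
  ring

theorem aux_rep {A : Type*} [CommRing A] {n : ℕ} (g : Fin n → A) (k : ℕ) :
    ∀ c ∈ (Ideal.span (Set.range g)) ^ k, ∃ C : MvPolynomial (Fin n) A,
      C.IsHomogeneous k ∧ aeval g C = c := by
  induction k with
  | zero =>
    intro c _
    exact ⟨MvPolynomial.C c, isHomogeneous_C _ _, by simp⟩
  | succ k ih =>
    intro c hc
    rw [pow_succ] at hc
    refine Submodule.mul_induction_on hc ?_ ?_
    · intro a ha b hb
      obtain ⟨Ca, hCa, hCae⟩ := ih a ha
      obtain ⟨r, hr⟩ := (Submodule.mem_span_range_iff_exists_fun A).mp hb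
      refine ⟨Ca * ∑ j, MvPolynomial.C (r j) * X j, ?_, ?_⟩
      · refine hCa.mul (n := 1) ?_
        have : ∀ j : Fin n, ((MvPolynomial.C (r j) * X j : MvPolynomial (Fin n) A)).IsHomogeneous 1 := by
          intro j
          simpa using (isHomogeneous_C _ (r j)).mul (isHomogeneous_X _ j)
        exact Submodule.sum_mem (homogeneousSubmodule (Fin n) A 1) fun j _ => this j
      · simp only [map_mul, map_sum, hCae, aeval_C, aeval_X]
        rw [← hr]
        simp [smul_eq_mul]
    · rintro x y ⟨Cx, hx, ex⟩ ⟨Cy, hy, ey⟩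
      exact ⟨Cx + Cy, hx.add hy, by rw [map_add, ex, ey]⟩

/-- Let `A` be a commutative local ring and `f, g_1, …, g_n ∈ A` with `f`
integral over the ideal `I = (g_1, …, g_n)`. If property (GCL) holds, i.e. there exists
`N ≥ 0` with `s^N · ker φ ⊆ ker^{(1)} φ`, then `f ∈ (g_1, …, g_n)`. -/
theorem mem_of_GCL {A : Type*} [CommRing A] [IsLocalRing A] {n : ℕ}
    (f : A) (g : Fin n → A)
    (hint : ∃ d : ℕ, 0 < d ∧ ∃ c : ℕ → A,
      (∀ i < d, c i ∈ (Ideal.span (Set.range g)) ^ (d - i)) ∧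
      f ^ d + ∑ i ∈ Finset.range d, c i * f ^ i = 0)
    (hGCL : ∃ N : ℕ, ∀ p ∈ RingHom.ker (reesPhi f g),
      (X 0 : MvPolynomial (Fin (n + 1)) A) ^ N * p ∈ kerOne f g) :
    f ∈ Ideal.span (Set.range g) := by
  classical
  obtain ⟨d, hd, c, hc, heq⟩ := hint
  obtain ⟨N, hN⟩ := hGCL
  set I : Ideal A := Ideal.span (Set.range g) with hI
  -- homogeneous representatives of the coefficients `c i`
  have hrep : ∀ i, i < d → ∃ C : MvPolynomial (Fin n) A,
      C.IsHomogeneous (d - i) ∧ aeval g C = c i := fun i hi => aux_rep g (d - i) (c i) (hc i hi)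
  choose! Cc hChom hCev using hrep
  set v : Fin (n + 1) → Polynomial A :=
    Fin.cons (Polynomial.C f * Polynomial.X) (fun j => Polynomial.C (g j) * Polynomial.X) with hv
  have hrees : reesPhi f g = aeval v := rfl
  set p : MvPolynomial (Fin (n + 1)) A :=
    X 0 ^ d + ∑ i ∈ Finset.range d, rename Fin.succ (Cc i) * X 0 ^ i with hp
  have hreesX0 : reesPhi f g (X 0) = Polynomial.C f * Polynomial.X := by
    rw [hrees, aeval_X, hv, Fin.cons_zero]
  -- each term of `p` maps to `C (c i) * C f ^ i * X ^ d`
  have hterm : ∀ i ∈ Finset.range d,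
      reesPhi f g (rename Fin.succ (Cc i) * X 0 ^ i)
        = Polynomial.C (c i) * Polynomial.C f ^ i * Polynomial.X ^ d := by
    intro i hi
    have hi' := Finset.mem_range.mp hi
    have h2 : aeval (fun j => Polynomial.C (g j)) (Cc i) = Polynomial.C (c i) := by
      have h3 := MvPolynomial.comp_aeval_apply g (Polynomial.CAlgHom : A →ₐ[A] Polynomial A) (Cc i)
      simp only [Polynomial.CAlgHom] at h3
      rw [hCev i hi'] at h3
      simpa using h3.symm
    have h1 : reesPhi f g (rename Fin.succ (Cc i)) = Polynomial.X ^ (d - i) * Polynomial.C (c i) := by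
      rw [hrees, aeval_rename]
      have hcomp : (v ∘ Fin.succ) = (Polynomial.X : Polynomial A) • (fun j => Polynomial.C (g j)) := by
        funext j
        simp only [hv, Function.comp_apply, Fin.cons_succ, Pi.smul_apply, smul_eq_mul]
        ring
      rw [hcomp, aux_aeval_smul (hChom i hi'), h2]
    have hX : (Polynomial.X : Polynomial A) ^ (d - i) * Polynomial.X ^ i = Polynomial.X ^ d := by
      rw [← pow_add, Nat.sub_add_cancel hi'.le]
    rw [map_mul, map_pow, hreesX0, h1]
    calc Polynomial.X ^ (d - i) * Polynomial.C (c i) * (Polynomial.C f * Polynomial.X) ^ i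
        = Polynomial.C (c i) * Polynomial.C f ^ i * (Polynomial.X ^ (d - i) * Polynomial.X ^ i) := by
          ring
      _ = Polynomial.C (c i) * Polynomial.C f ^ i * Polynomial.X ^ d := by rw [hX]
  -- `p` is in the kernel of `φ`
  have hpker : p ∈ RingHom.ker (reesPhi f g) := by
    rw [RingHom.mem_ker, hp, map_add, map_pow, hreesX0, map_sum, Finset.sum_congr rfl hterm]
    have : (Polynomial.C (f ^ d + ∑ i ∈ Finset.range d, c i * f ^ i) : Polynomial A) = 0 := by
      rw [heq, map_zero]
    calc (Polynomial.C f * Polynomial.X) ^ d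
          + ∑ i ∈ Finset.range d, Polynomial.C (c i) * Polynomial.C f ^ i * Polynomial.X ^ d
        = Polynomial.C (f ^ d + ∑ i ∈ Finset.range d, c i * f ^ i) * Polynomial.X ^ d := by
          simp only [map_add, map_sum, map_mul, map_pow, mul_pow, Finset.sum_mul, add_mul]
      _ = 0 := by rw [this, zero_mul]
  -- the evaluation at `s = 1`, `ξ = 0`
  set ψ : MvPolynomial (Fin (n + 1)) A →ₐ[A] A := aeval (Fin.cons (1 : A) (0 : Fin n → A)) with hψ
  -- ψ maps kerOne into the colon ideal (I : f)
  have hψJ : kerOne f g ≤ Ideal.comap (ψ : MvPolynomial (Fin (n + 1)) A →+* A)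
      (I.colon (Ideal.span {f})) := by
    rw [kerOne, Ideal.span_le]
    rintro L ⟨hLk, hLh⟩
    simp only [SetLike.mem_coe, Ideal.mem_comap, RingHom.coe_coe]
    rw [Ideal.mem_colon_span_singleton]
    -- first: evaluation of L at (f, g) is zero
    have h0 : reesPhi f g L = 0 := hLk
    have hev : aeval (Fin.cons f g) L = 0 := by
      have h1 := MvPolynomial.comp_aeval_apply v (Polynomial.aeval (1 : A) : Polynomial A →ₐ[A] A) L
      rw [← hrees, h0, map_zero] at h1
      have h2 : (fun i => Polynomial.aeval (1 : A) (v i)) = Fin.cons f g := by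
        funext i
        refine Fin.cases ?_ ?_ i
        · simp [hv]
        · intro j; simp [hv]
      rw [h2] at h1
      exact h1.symm
    -- push to the quotient A ⧸ I
    set q : A →ₐ[A] A ⧸ I := Ideal.Quotient.mkₐ A I with hq
    have h3 := MvPolynomial.comp_aeval_apply (Fin.cons f g : Fin (n+1) → A) q L
    rw [hev, map_zero] at h3
    set x : Fin (n + 1) → A ⧸ I := fun i : Fin (n + 1) => q ((Fin.cons (1 : A) (0 : Fin n → A) : Fin (n+1) → A) i) with hx
    have hsm : (fun i => q ((Fin.cons f g : Fin (n+1) → A) i)) = q f • x := by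
      funext i
      refine Fin.cases ?_ ?_ i
      · simp [hx, Fin.cons_zero]
      · intro j
        have : q (g j) = 0 := by
          simp only [hq, Ideal.Quotient.mkₐ_eq_mk, Ideal.Quotient.eq_zero_iff_mem]
          exact Ideal.subset_span ⟨j, rfl⟩
        simp [hx, Fin.cons_succ, this]
    rw [hsm] at h3
    rw [aux_aeval_smul hLh (q f) x] at h3
    have h4 := MvPolynomial.comp_aeval_apply (Fin.cons (1 : A) (0 : Fin n → A)) q L
    rw [← hx] at h4
    rw [← h4, pow_one] at h3
    have h5 : q (ψ L * f) = 0 := by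
      rw [map_mul, mul_comm]
      exact h3.symm
    simpa only [hq, Ideal.Quotient.mkₐ_eq_mk, Ideal.Quotient.eq_zero_iff_mem] using h5
  -- apply GCL to p
  have hmem := hψJ (hN p hpker)
  simp only [Ideal.mem_comap, RingHom.coe_coe] at hmem
  -- compute ψ (X 0 ^ N * p) = 1
  have hψp : ψ ((X 0 : MvPolynomial (Fin (n + 1)) A) ^ N * p) = 1 := by
    rw [map_mul, map_pow, hψ, aeval_X, Fin.cons_zero, one_pow, one_mul]
    rw [hp, map_add, map_pow, aeval_X, Fin.cons_zero, one_pow, map_sum]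
    have hz : ∀ i ∈ Finset.range d,
        (aeval (Fin.cons (1 : A) (0 : Fin n → A))) (rename Fin.succ (Cc i) * X 0 ^ i) = 0 := by
      intro i hi
      have hi' := Finset.mem_range.mp hi
      rw [map_mul, aeval_rename]
      have hcomp : ((Fin.cons (1 : A) (0 : Fin n → A)) ∘ Fin.succ) = (0 : Fin n → A) := by
        funext j; simp [Fin.cons_succ]
      rw [hcomp, aeval_zero]
      have : constantCoeff (Cc i) = 0 := by
        have := (hChom i hi').coeff_eq_zero (d := 0)
          (by rw [map_zero]; exact (Nat.sub_ne_zero_of_lt hi').symm)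
        simpa [constantCoeff_eq] using this
      rw [this, map_zero, zero_mul]
    rw [Finset.sum_congr rfl hz]
    simp
  rw [hψp] at hmem
  have := Ideal.mem_colon_span_singleton.mp hmem
  rwa [one_mul] at this
end

section
/- Let A = ℂ[x_1, x_2, x_3] and f = x_1·x_2·(x_1 + x_2)·(x_1 + x_2·x_3). Then the A-module of logarithmic derivations with respect to f is a free A-module of rank 3, and it admits a basis δ_1, δ_2, δ_3 such that δ_1(f) = δ_2(f) = 0 and δ_3(f) = 4·f. -/
open MvPolynomial
set_option maxHeartbeats 1000000

/-- Evaluation of derivations at a fixed element `h`, as an `A`-linear map. -/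
noncomputable def derivEval (R : Type*) {A : Type*} [CommRing R] [CommRing A] [Algebra R A]
    (h : A) : Derivation R A A →ₗ[A] A where
  toFun δ := δ h
  map_add' _ _ := rfl
  map_smul' _ _ := rfl

/-- The `A`-submodule of `R`-derivations `δ` of `A` that are logarithmic with respect
to `h`, i.e. such that `δ h ∈ (h)`. -/
noncomputable def logDer (R : Type*) {A : Type*} [CommRing R] [CommRing A] [Algebra R A]
    (h : A) : Submodule A (Derivation R A A) :=
  Submodule.comap (derivEval R h) (Ideal.span {h})

/-- The equation of the "four lines" divisor in `ℂ^3`: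
`f = x_1·x_2·(x_1 + x_2)·(x_1 + x_2·x_3)`. -/
noncomputable def fourLines : MvPolynomial (Fin 3) ℂ :=
  X 0 * X 1 * (X 0 + X 1) * (X 0 + X 1 * X 2)

namespace FourLinesAux

noncomputable section

abbrev A3 : Type := MvPolynomial (Fin 3) ℂ

/-- the partial derivatives of `fourLines` -/
def pd0 : A3 := X 1^3*X 2 + 2*X 0*X 1^2 + 2*X 0*X 1^2*X 2 + 3*X 0^2*X 1
def pd1 : A3 := 3*X 0*X 1^2*X 2 + 2*X 0^2*X 1 + 2*X 0^2*X 1*X 2 + X 0^3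
def pd2 : A3 := X 0*X 1^3 + X 0^2*X 1^2

lemma deriv_apply (δ : Derivation ℂ A3 A3) :
    δ fourLines = pd0 * δ (X 0) + pd1 * δ (X 1) + pd2 * δ (X 2) := by
  simp only [fourLines, Derivation.leibniz, map_add, smul_eq_mul, pd0, pd1, pd2]
  ring

/-- the three basis derivations -/
def d1 : Derivation ℂ A3 A3 :=
  mkDerivation ℂ ![X 0 * X 1, X 1^2, -4*(X 0 + X 1 * X 2)]
def d2 : Derivation ℂ A3 A3 :=
  mkDerivation ℂ ![X 0^2 + 2*X 0*X 1, -2*X 1^2 - 3*X 0*X 1, 4*X 2*(X 0 + X 1)]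
def d3 : Derivation ℂ A3 A3 := mkDerivation ℂ ![X 0, X 1, 0]

lemma d1f : d1 fourLines = 0 := by
  rw [deriv_apply]
  simp only [d1, mkDerivation_X, Matrix.cons_val_zero, Matrix.cons_val_one, Matrix.head_cons,
    Matrix.cons_val_two, Matrix.tail_cons]
  simp only [pd0, pd1, pd2]; ring

lemma d2f : d2 fourLines = 0 := by
  rw [deriv_apply]
  simp only [d2, mkDerivation_X, Matrix.cons_val_zero, Matrix.cons_val_one, Matrix.head_cons,
    Matrix.cons_val_two, Matrix.tail_cons]
  simp only [pd0, pd1, pd2]; ring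

lemma d3f : d3 fourLines = 4 * fourLines := by
  rw [deriv_apply]
  simp only [d3, mkDerivation_X, Matrix.cons_val_zero, Matrix.cons_val_one, Matrix.head_cons,
    Matrix.cons_val_two, Matrix.tail_cons]
  simp only [pd0, pd1, pd2, fourLines]; ring

/-- primality of the four linear factors -/
lemma primeX0 : Prime (X 0 : A3) := by
  refine (MulEquiv.prime_iff (MvPolynomial.finSuccEquiv ℂ 2).toRingEquiv.toMulEquiv).mp ?_
  have h : (((finSuccEquiv ℂ 2).toRingEquiv.toMulEquiv) (X 0 : A3)) = Polynomial.X := by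
    simp; exact finSuccEquiv_X_zero
  rw [h]; exact Polynomial.prime_X

lemma primeX1 : Prime (X 1 : A3) := by
  refine (MulEquiv.prime_iff (MvPolynomial.renameEquiv ℂ (Equiv.swap (0:Fin 3) 1)).toRingEquiv.toMulEquiv).mp ?_
  have h : ((MvPolynomial.renameEquiv ℂ (Equiv.swap (0:Fin 3) 1)).toRingEquiv.toMulEquiv)
      (X 1 : A3) = (X 0 : A3) := by simp
  rw [h]; exact primeX0

def sh1 : A3 ≃ₐ[ℂ] A3 :=
  AlgEquiv.ofAlgHom (aeval ![X 0 + X 1, X 1, X 2]) (aeval ![X 0 - X 1, X 1, X 2])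
    (by apply MvPolynomial.algHom_ext; intro i; fin_cases i <;> simp)
    (by apply MvPolynomial.algHom_ext; intro i; fin_cases i <;> simp)

lemma primeX01 : Prime (X 0 + X 1 : A3) := by
  have h : (sh1.toRingEquiv.toMulEquiv) (X 0 : A3) = (X 0 + X 1 : A3) := by simp [sh1]
  exact h ▸ ((MulEquiv.prime_iff sh1.toRingEquiv.toMulEquiv).mpr primeX0)

def sh2 : A3 ≃ₐ[ℂ] A3 :=
  AlgEquiv.ofAlgHom (aeval ![X 0 + X 1 * X 2, X 1, X 2]) (aeval ![X 0 - X 1 * X 2, X 1, X 2])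
    (by apply MvPolynomial.algHom_ext; intro i; fin_cases i <;> simp)
    (by apply MvPolynomial.algHom_ext; intro i; fin_cases i <;> simp)

lemma primeX012 : Prime (X 0 + X 1 * X 2 : A3) := by
  have h : (sh2.toRingEquiv.toMulEquiv) (X 0 : A3) = (X 0 + X 1 * X 2 : A3) := by simp [sh2]
  exact h ▸ ((MulEquiv.prime_iff sh2.toRingEquiv.toMulEquiv).mpr primeX0)

lemma not_dvd_pt {l p : A3} (pt : Fin 3 → ℂ) (h1 : eval pt l = 0) (h2 : eval pt p ≠ 0) :
    ¬ l ∣ p := by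
  rintro ⟨t, rfl⟩; apply h2; rw [map_mul, h1, zero_mul]

lemma fourLines_ne_zero : fourLines ≠ 0 := by
  intro h
  have := congrArg (eval ![1,1,1]) h
  simp [fourLines] at this

/-- the key divisibility lemma: if `f` divides `p·∂ᵢf` for all `i`, then `f ∣ p`. -/
lemma key_dvd {p : A3} (h0 : fourLines ∣ p * pd0) (h1 : fourLines ∣ p * pd1)
    (h2 : fourLines ∣ p * pd2) : fourLines ∣ p := by
  have hd1 : (X 0 : A3) ∣ p := by
    have hx : (X 0:A3) ∣ p * pd0 :=
      dvd_trans ⟨X 1*(X 0+X 1)*(X 0+X 1*X 2), by rw [fourLines]; ring⟩ h0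
    rcases (primeX0.dvd_mul.mp hx) with h | h
    · exact h
    · exact absurd h (not_dvd_pt ![0,1,1] (by simp) (by norm_num [pd0, Matrix.cons_val_two, Matrix.tail_cons, Matrix.head_cons]))
  have hd2 : (X 1 : A3) ∣ p := by
    have hx : (X 1:A3) ∣ p * pd1 :=
      dvd_trans ⟨X 0*(X 0+X 1)*(X 0+X 1*X 2), by rw [fourLines]; ring⟩ h1
    rcases (primeX1.dvd_mul.mp hx) with h | h
    · exact h
    · exact absurd h (not_dvd_pt ![1,0,0] (by simp) (by norm_num [pd1]))
  have hd3 : (X 0 + X 1 : A3) ∣ p := by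
    have hx : (X 0 + X 1:A3) ∣ p * pd0 :=
      dvd_trans ⟨X 0*X 1*(X 0+X 1*X 2), by rw [fourLines]; ring⟩ h0
    rcases (primeX01.dvd_mul.mp hx) with h | h
    · exact h
    · exact absurd h (not_dvd_pt ![1,-1,0] (by simp) (by norm_num [pd0, Matrix.cons_val_two, Matrix.tail_cons, Matrix.head_cons]))
  have hd4 : (X 0 + X 1 * X 2 : A3) ∣ p := by
    have hx : (X 0 + X 1 * X 2:A3) ∣ p * pd2 :=
      dvd_trans ⟨X 0*X 1*(X 0+X 1), by rw [fourLines]; ring⟩ h2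
    rcases (primeX012.dvd_mul.mp hx) with h | h
    · exact h
    · exact absurd h (not_dvd_pt ![-2,1,2] (by norm_num [Matrix.cons_val_two, Matrix.tail_cons, Matrix.head_cons]) (by norm_num [pd2]))
  obtain ⟨t1, rfl⟩ := hd1
  have ht2 : (X 1 : A3) ∣ t1 := by
    rcases primeX1.dvd_mul.mp hd2 with h | h
    · exact absurd h (not_dvd_pt ![1,0,0] (by simp) (by simp))
    · exact h
  obtain ⟨t2, rfl⟩ := ht2
  have ht3 : (X 0 + X 1 : A3) ∣ t2 := by
    rcases primeX01.dvd_mul.mp hd3 with h | h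
    · exact absurd h (not_dvd_pt ![1,-1,0] (by norm_num) (by simp))
    · rcases primeX01.dvd_mul.mp h with h' | h'
      · exact absurd h' (not_dvd_pt ![1,-1,0] (by norm_num) (by norm_num))
      · exact h'
  obtain ⟨t3, rfl⟩ := ht3
  have ht4 : (X 0 + X 1 * X 2 : A3) ∣ t3 := by
    rcases primeX012.dvd_mul.mp hd4 with h | h
    · exact absurd h (not_dvd_pt ![-2,1,2] (by norm_num [Matrix.cons_val_two, Matrix.tail_cons, Matrix.head_cons]) (by norm_num))
    · rcases primeX012.dvd_mul.mp h with h' | h'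
      · exact absurd h' (not_dvd_pt ![-2,1,2] (by norm_num [Matrix.cons_val_two, Matrix.tail_cons, Matrix.head_cons]) (by simp))
      · rcases primeX012.dvd_mul.mp h' with h'' | h''
        · exact absurd h'' (not_dvd_pt ![-2,1,2] (by norm_num [Matrix.cons_val_two, Matrix.tail_cons, Matrix.head_cons]) (by norm_num))
        · exact h''
  obtain ⟨t4, rfl⟩ := ht4
  exact ⟨t4, by rw [fourLines]; ring⟩

lemma mem_logDer_iff {δ : Derivation ℂ A3 A3} :
    δ ∈ logDer ℂ fourLines ↔ fourLines ∣ δ fourLines := by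
  rw [logDer, Submodule.mem_comap, Ideal.mem_span_singleton]
  rfl

lemma mem_d1 : d1 ∈ logDer ℂ fourLines :=
  mem_logDer_iff.mpr (by rw [d1f]; exact dvd_zero _)
lemma mem_d2 : d2 ∈ logDer ℂ fourLines :=
  mem_logDer_iff.mpr (by rw [d2f]; exact dvd_zero _)
lemma mem_d3 : d3 ∈ logDer ℂ fourLines :=
  mem_logDer_iff.mpr (by rw [d3f]; exact ⟨4, by ring⟩)

def e1 : logDer ℂ fourLines := ⟨d1, mem_d1⟩
def e2 : logDer ℂ fourLines := ⟨d2, mem_d2⟩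
def e3 : logDer ℂ fourLines := ⟨d3, mem_d3⟩

lemma hC16 : (C (-1/16 : ℂ) : A3) * 16 = -1 := by
  have h16 : (16 : A3) = C (16 : ℂ) := by
    simp only [map_ofNat]
  rw [h16, ← C_mul]
  norm_num

set_option maxHeartbeats 1000000 in
lemma hli : LinearIndependent A3 ![e1, e2, e3] := by
  refine (Fintype.linearIndependent_iff (R := A3) (v := ![e1, e2, e3])).mpr fun g hg => ?_
  have hg' : g 0 • e1 + g 1 • e2 + g 2 • e3 = 0 := by
    simpa [Fin.sum_univ_three] using hg
  have hg2 : (g 0 • d1 + g 1 • d2 + g 2 • d3 : Derivation ℂ A3 A3) = 0 := by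
    have := congrArg Subtype.val hg'
    simpa [e1, e2, e3] using this
  have hval : ∀ j : Fin 3, g 0 * d1 (X j) + g 1 * d2 (X j) + g 2 * d3 (X j) = 0 := by
    intro j
    have := congrArg (fun D : Derivation ℂ A3 A3 => D (X j)) hg2
    simpa [smul_eq_mul] using this
  have h0 := hval 0
  have h1 := hval 1
  have h2 := hval 2
  simp only [d1, d2, d3, mkDerivation_X, Matrix.cons_val_zero, Matrix.cons_val_one,
    Matrix.head_cons, Matrix.cons_val_two, Matrix.tail_cons] at h0 h1 h2
  have hz : ∀ i : Fin 3, fourLines * ((16:A3) * g i) = 0 := by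
    intro i
    fin_cases i
    · show X 0 * X 1 * (X 0 + X 1) * (X 0 + X 1 * X 2) * ((16:A3) * g 0) = 0
      linear_combination (4*X 1^2*X 2 + 4*X 0*X 1*X 2) * h0 +
        (-4*X 0*X 1*X 2 - 4*X 0^2*X 2) * h1 + (-4*X 0*X 1^2 - 4*X 0^2*X 1) * h2
    · show X 0 * X 1 * (X 0 + X 1) * (X 0 + X 1 * X 2) * ((16:A3) * g 1) = 0
      linear_combination (4*X 1^2*X 2 + 4*X 0*X 1) * h0 +
        (-4*X 0*X 1*X 2 - 4*X 0^2) * h1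
    · show X 0 * X 1 * (X 0 + X 1) * (X 0 + X 1 * X 2) * ((16:A3) * g 2) = 0
      linear_combination (4*X 1^3*X 2 + 8*X 0*X 1^2 + 8*X 0*X 1^2*X 2 + 12*X 0^2*X 1) * h0 +
        (12*X 0*X 1^2*X 2 + 8*X 0^2*X 1 + 8*X 0^2*X 1*X 2 + 4*X 0^3) * h1 +
        (4*X 0*X 1^3 + 4*X 0^2*X 1^2) * h2
  intro i
  have := (mul_eq_zero.mp (hz i)).resolve_left fourLines_ne_zero
  have h16 : (16 : A3) ≠ 0 := by
    intro h
    have := congrArg (eval ![0,0,0]) h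
    norm_num at this
  exact (mul_eq_zero.mp this).resolve_left h16

lemma hsp : ⊤ ≤ Submodule.span A3 (Set.range ![e1, e2, e3]) := by
  rintro ⟨δ, hδ⟩ -
  obtain ⟨q, hq⟩ := mem_logDer_iff.mp hδ
  set a := δ (X 0) with ha
  set b := δ (X 1) with hb
  set c := δ (X 2) with hc
  have hrel : pd0 * a + pd1 * b + pd2 * c = fourLines * q := (deriv_apply δ).symm.trans hq
  simp only [pd0, pd1, pd2, fourLines] at hrel
  -- the three Cramer determinants are divisible by fourLines
  have hD0 : fourLines ∣ (-4*X 1^2*X 2*a + 4*X 0*X 1*X 2*b - 4*X 0*X 1*X 2*a + 4*X 0*X 1^2*c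
      + 4*X 0^2*X 2*b + 4*X 0^2*X 1*c) := by
    refine key_dvd ⟨q*(-4*X 1^2*X 2 - 4*X 0*X 1*X 2)
        + 4*(4*X 1*X 2*b + 2*X 1^2*c + 4*X 0*X 2*b + 3*X 0*X 1*c), ?_⟩
      ⟨q*(4*X 0*X 1*X 2 + 4*X 0^2*X 2)
        + 4*(-4*X 1*X 2*a - 4*X 0*X 2*a + 2*X 0*X 1*c + X 0^2*c), ?_⟩
      ⟨q*(4*X 0*X 1^2 + 4*X 0^2*X 1)
        + 4*(-2*X 1^2*a - 2*X 0*X 1*b - 3*X 0*X 1*a - X 0^2*b), ?_⟩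
    · simp only [pd0, pd1, pd2, fourLines]
      linear_combination (-4*X 1^2*X 2 - 4*X 0*X 1*X 2) * hrel
    · simp only [pd0, pd1, pd2, fourLines]
      linear_combination (4*X 0*X 1*X 2 + 4*X 0^2*X 2) * hrel
    · simp only [pd0, pd1, pd2, fourLines]
      linear_combination (4*X 0*X 1^2 + 4*X 0^2*X 1) * hrel
  have hD1 : fourLines ∣ (-4*X 1^2*X 2*a - 4*X 0*X 1*a + 4*X 0*X 1*X 2*b + 4*X 0^2*b) := by
    refine key_dvd ⟨q*(-4*X 1^2*X 2 - 4*X 0*X 1)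
        + 4*(4*X 1*X 2*b + X 1^2*c + 4*X 0*b), ?_⟩
      ⟨q*(4*X 0*X 1*X 2 + 4*X 0^2)
        + 4*(-4*X 1*X 2*a - 4*X 0*a - X 0*X 1*c), ?_⟩
      ⟨4*(-X 1^2*a + X 0*X 1*b), ?_⟩
    · simp only [pd0, pd1, pd2, fourLines]
      linear_combination (-4*X 1^2*X 2 - 4*X 0*X 1) * hrel
    · simp only [pd0, pd1, pd2, fourLines]
      linear_combination (4*X 0*X 1*X 2 + 4*X 0^2) * hrel
    · simp only [pd0, pd1, pd2, fourLines]
      linear_combination (0:A3) * hrel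
  have hD2 : fourLines ∣ (-4*X 1^3*X 2*a - 8*X 0*X 1^2*a - 12*X 0*X 1^2*X 2*b
      - 8*X 0*X 1^2*X 2*a - 4*X 0*X 1^3*c - 8*X 0^2*X 1*b - 12*X 0^2*X 1*a
      - 8*X 0^2*X 1*X 2*b - 4*X 0^2*X 1^2*c - 4*X 0^3*b) := by
    refine key_dvd ⟨q*(-4*X 1^3*X 2 - 8*X 0*X 1^2 - 8*X 0*X 1^2*X 2 - 12*X 0^2*X 1), ?_⟩
      ⟨q*(-12*X 0*X 1^2*X 2 - 8*X 0^2*X 1 - 8*X 0^2*X 1*X 2 - 4*X 0^3), ?_⟩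
      ⟨q*(-4*X 0*X 1^3 - 4*X 0^2*X 1^2), ?_⟩
    · simp only [pd0, pd1, pd2, fourLines]
      linear_combination (-4*X 1^3*X 2 - 8*X 0*X 1^2 - 8*X 0*X 1^2*X 2 - 12*X 0^2*X 1) * hrel
    · simp only [pd0, pd1, pd2, fourLines]
      linear_combination (-12*X 0*X 1^2*X 2 - 8*X 0^2*X 1 - 8*X 0^2*X 1*X 2 - 4*X 0^3) * hrel
    · simp only [pd0, pd1, pd2, fourLines]
      linear_combination (-4*X 0*X 1^3 - 4*X 0^2*X 1^2) * hrel
  obtain ⟨p0, hp0⟩ := hD0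
  obtain ⟨p1, hp1⟩ := hD1
  obtain ⟨p2, hp2⟩ := hD2
  simp only [fourLines] at hp0 hp1 hp2
  -- componentwise reconstruction, after cancelling fourLines
  have hS : ∀ j : Fin 3,
      p0 * d1 (X j) + p1 * d2 (X j) + p2 * d3 (X j) + 16 * δ (X j) = 0 := by
    intro j
    have hf0 := fourLines_ne_zero
    fin_cases j
    · refine (mul_eq_zero.mp ?_).resolve_left hf0
      show fourLines * (p0 * d1 (X 0) + p1 * d2 (X 0) + p2 * d3 (X 0) + 16 * δ (X 0)) = 0
      simp only [d1, d2, d3, mkDerivation_X, Matrix.cons_val_zero, fourLines]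
      linear_combination (-(X 0*X 1)) * hp0 + (-(X 0^2+2*X 0*X 1)) * hp1 + (-(X 0)) * hp2
    · refine (mul_eq_zero.mp ?_).resolve_left hf0
      show fourLines * (p0 * d1 (X 1) + p1 * d2 (X 1) + p2 * d3 (X 1) + 16 * δ (X 1)) = 0
      simp only [d1, d2, d3, mkDerivation_X, Matrix.cons_val_one, Matrix.head_cons, Matrix.cons_val_zero, fourLines]
      linear_combination (-(X 1^2)) * hp0 + (-(-2*X 1^2-3*X 0*X 1)) * hp1 + (-(X 1)) * hp2
    · refine (mul_eq_zero.mp ?_).resolve_left hf0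
      show fourLines * (p0 * d1 (X 2) + p1 * d2 (X 2) + p2 * d3 (X 2) + 16 * δ (X 2)) = 0
      simp only [d1, d2, d3, mkDerivation_X, Matrix.cons_val_two, Matrix.tail_cons,
        Matrix.head_cons, fourLines]
      linear_combination (-(-4*(X 0+X 1*X 2))) * hp0 + (-(4*X 2*(X 0+X 1))) * hp1
  have heq : (⟨δ, hδ⟩ : logDer ℂ fourLines) =
      (C (-1/16:ℂ) * p0) • e1 + (C (-1/16:ℂ) * p1) • e2 + (C (-1/16:ℂ) * p2) • e3 := by
    apply Subtype.ext
    show δ = _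
    refine MvPolynomial.derivation_ext fun i => ?_
    have hSi := hS i
    have : ((((C (-1/16:ℂ) * p0) • e1 + (C (-1/16:ℂ) * p1) • e2 + (C (-1/16:ℂ) * p2) • e3 :
        logDer ℂ fourLines) : Derivation ℂ A3 A3)) (X i)
        = (C (-1/16:ℂ) * p0) * d1 (X i) + (C (-1/16:ℂ) * p1) * d2 (X i)
          + (C (-1/16:ℂ) * p2) * d3 (X i) := by
      simp [e1, e2, e3, smul_eq_mul]
    rw [this]
    linear_combination (-(C (-1/16:ℂ))) * hSi + (δ (X i)) * hC16
  rw [heq]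
  refine Submodule.add_mem _ (Submodule.add_mem _ ?_ ?_) ?_ <;>
    refine Submodule.smul_mem _ _ (Submodule.subset_span ?_)
  · exact ⟨0, by simp⟩
  · exact ⟨1, by simp⟩
  · exact ⟨2, by simp⟩

end

end FourLinesAux

/-- For `f = x_1·x_2·(x_1 + x_2)·(x_1 + x_2·x_3)` in `A = ℂ[x_1,x_2,x_3]`,
the `A`-module of logarithmic derivations with respect to `f` is free of rank `3`, with a
basis `δ_1, δ_2, δ_3` satisfying `δ_1 f = δ_2 f = 0` and `δ_3 f = 4·f`. -/
theorem fourLines_free_basis :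
    ∃ b : Module.Basis (Fin 3) (MvPolynomial (Fin 3) ℂ) (logDer ℂ fourLines),
      (b 0).1 fourLines = 0 ∧ (b 1).1 fourLines = 0 ∧
        (b 2).1 fourLines = 4 * fourLines := by
  refine ⟨Module.Basis.mk (v := ![FourLinesAux.e1, FourLinesAux.e2, FourLinesAux.e3])
      FourLinesAux.hli FourLinesAux.hsp, ?_, ?_, ?_⟩
  · rw [Module.Basis.mk_apply]
    show FourLinesAux.d1 fourLines = 0
    exact FourLinesAux.d1f
  · rw [Module.Basis.mk_apply]
    show FourLinesAux.d2 fourLines = 0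
    exact FourLinesAux.d2f
  · rw [Module.Basis.mk_apply]
    show FourLinesAux.d3 fourLines = 4 * fourLines
    exact FourLinesAux.d3f
end
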